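/- Soundness and completeness of IEL⁻ and IEL with respect to relational semantics: a formula φ ∈ Fm_e is a theorem of IEL⁻ (respectively, of IEL) if and only if φ is true in all relational IEL⁻-models (respectively, in all relational IEL-models), where truth in a relational model means satisfaction at the bottom world w_⊥. -/
import Mathlib


/-- The raw data of an intuitionistic general frame: worlds, an accessibility
relation, a set `P` of propositions, a belief function `E` and a bottom world. -/
structure Frame (W : Type*) where
  R : W → W → Prop
  P : Set (Set W)
  E : W → Set (Set W)
  wbot : W

/-- The operation `A ⊃ B` on propositions. -/
def Frame.himp {W : Type*} (F : Frame W) (A B : Set W) : Set W :=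
  {w | ∀ w', F.R w w' → w' ∈ A → w' ∈ B}

/-- The operation `KA = {w | A ∈ E(w)}` on propositions. -/
def Frame.kset {W : Type*} (F : Frame W) (A : Set W) : Set W :=
  {w | A ∈ F.E w}

/-- `w` is an `R`-maximal world. -/
def Frame.IsMaxW {W : Type*} (F : Frame W) (w : W) : Prop :=
  ∀ w', F.R w w' → w' = w

/-- The basic frame conditions (of an `EL5⁻`-frame, except for the designated
maximal world): `R` is a partial order with least element `wbot` in which every
`R`-chain has an upper bound; `P` consists of upper sets, contains `∅` and `W`
and is closed under `∩`, `∪`, `⊃` and `K`; each `E(w)` is a filter on `P`; and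
`E` is monotone. -/
def IsBaseFrame {W : Type*} (F : Frame W) : Prop :=
  (∀ w, F.R w w) ∧
  (∀ ⦃w w' w''⦄, F.R w w' → F.R w' w'' → F.R w w'') ∧
  (∀ ⦃w w'⦄, F.R w w' → F.R w' w → w = w') ∧
  (∀ w, F.R F.wbot w) ∧
  (∀ C : Set W, IsChain F.R C → ∃ ub, ∀ w ∈ C, F.R w ub) ∧
  (∀ A ∈ F.P, ∀ ⦃w w'⦄, F.R w w' → w ∈ A → w' ∈ A) ∧
  (∅ : Set W) ∈ F.P ∧
  (Set.univ : Set W) ∈ F.P ∧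
  (∀ A ∈ F.P, ∀ B ∈ F.P, A ∩ B ∈ F.P) ∧
  (∀ A ∈ F.P, ∀ B ∈ F.P, A ∪ B ∈ F.P) ∧
  (∀ A ∈ F.P, ∀ B ∈ F.P, F.himp A B ∈ F.P) ∧
  (∀ A ∈ F.P, F.kset A ∈ F.P) ∧
  (∀ w, F.E w ⊆ F.P) ∧
  (∀ w, (F.E w).Nonempty) ∧
  (∀ w, ∀ A ∈ F.E w, ∀ B ∈ F.E w, A ∩ B ∈ F.E w) ∧
  (∀ w, ∀ A ∈ F.E w, ∀ B ∈ F.P, A ⊆ B → B ∈ F.E w) ∧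
  (∀ ⦃w w'⦄, F.R w w' → F.E w ⊆ F.E w')

/-- The `E4L5⁻`-frame condition: `A ∈ E(w)` implies `KA ∈ E(w)`. -/
def E4Cond {W : Type*} (F : Frame W) : Prop :=
  ∀ w, ∀ A ∈ F.P, A ∈ F.E w → F.kset A ∈ F.E w

/-- The `E5L5⁻`-frame condition: if `A ∉ E(w')` for all `w' ≥ w`,
then `(KA ⊃ ∅) ∈ E(w)`. -/
def E5Cond {W : Type*} (F : Frame W) : Prop :=
  ∀ w, ∀ A ∈ F.P, (∀ w', F.R w w' → A ∉ F.E w') → F.himp (F.kset A) ∅ ∈ F.E w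

/-- The `E6L5⁻`-frame condition: `E` is constant, i.e. `E(w) = E(wbot)` for all `w`. -/
def E6Cond {W : Type*} (F : Frame W) : Prop :=
  ∀ w, F.E w = F.E F.wbot

/-- The knowledge condition of `EkL5`-frames: every believed proposition
contains all accessible maximal worlds. -/
def KnowCond {W : Type*} (F : Frame W) : Prop :=
  ∀ w, ∀ A ∈ F.E w, ∀ w', F.R w w' → F.IsMaxW w' → w' ∈ A

/-- The condition (IntCo) of intuitionistic co-reflection: `w ∈ A` implies `A ∈ E(w)`. -/
def IntCoCond {W : Type*} (F : Frame W) : Prop :=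
  ∀ w, ∀ A ∈ F.P, w ∈ A → A ∈ F.E w

/-- An `IEL⁻`-frame: the basic frame conditions (no designated maximal world)
together with (IntCo). -/
def IsIELmFrame {W : Type*} (F : Frame W) : Prop := IsBaseFrame F ∧ IntCoCond F

/-- An `IEL`-frame: an `IEL⁻`-frame in which every believed proposition contains
all accessible maximal worlds. -/
def IsIELFrame {W : Type*} (F : Frame W) : Prop := IsIELmFrame F ∧ KnowCond F

/-- A frame with a designated world `wT`. -/
structure EFrame (W : Type*) extends Frame W where
  wT : W

/-- An `EL5⁻`-frame: the basic frame conditions together with maximality of the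
designated world `wT`. -/
def IsEL5mFrame {W : Type*} (F : EFrame W) : Prop :=
  IsBaseFrame F.toFrame ∧ F.toFrame.IsMaxW F.wT
/-- Formulas of the pure epistemic language `Fm_e` (no `□`). -/
inductive FmE : Type
  | var : Nat → FmE
  | bot : FmE
  | and : FmE → FmE → FmE
  | or : FmE → FmE → FmE
  | imp : FmE → FmE → FmE
  | k : FmE → FmE

namespace FmE

def neg (φ : FmE) : FmE := φ.imp FmE.bot

end FmE

/-- Hilbert-style axiom schemes for IPC over the epistemic language `Fm_e`
(instantiated over all formulas, so that together with closure under MP this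
yields all substitution-instances of theorems of IPC). -/
inductive IPCAxE : FmE → Prop
  | k1 (φ ψ : FmE) : IPCAxE (φ.imp (ψ.imp φ))
  | k2 (φ ψ χ : FmE) : IPCAxE ((φ.imp (ψ.imp χ)).imp ((φ.imp ψ).imp (φ.imp χ)))
  | andI (φ ψ : FmE) : IPCAxE (φ.imp (ψ.imp (φ.and ψ)))
  | andE1 (φ ψ : FmE) : IPCAxE ((φ.and ψ).imp φ)
  | andE2 (φ ψ : FmE) : IPCAxE ((φ.and ψ).imp ψ)
  | orI1 (φ ψ : FmE) : IPCAxE (φ.imp (φ.or ψ))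
  | orI2 (φ ψ : FmE) : IPCAxE (ψ.imp (φ.or ψ))
  | orE (φ ψ χ : FmE) : IPCAxE ((φ.imp χ).imp ((ψ.imp χ).imp ((φ.or ψ).imp χ)))
  | efq (φ : FmE) : IPCAxE (FmE.bot.imp φ)

/-- Theorems of `IEL⁻` (for `re := False`) and of `IEL` (for `re := True`):
intuitionistic propositional logic plus (KBel) `K(φ→ψ)→(Kφ→Kψ)`, intuitionistic
co-reflection `φ→Kφ` and — in the case of `IEL` — intuitionistic reflection
`Kφ→¬¬φ`; Modus Ponens is the only rule. -/
inductive IELThm (re : Prop) : FmE → Prop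
  | ipc {φ : FmE} : IPCAxE φ → IELThm re φ
  | kbel (φ ψ : FmE) : IELThm re ((FmE.k (φ.imp ψ)).imp ((FmE.k φ).imp (FmE.k ψ)))
  | core (φ : FmE) : IELThm re (φ.imp (FmE.k φ))
  | intre (φ : FmE) : re → IELThm re ((FmE.k φ).imp (FmE.neg (FmE.neg φ)))
  | mp {φ ψ : FmE} : IELThm re (φ.imp ψ) → IELThm re φ → IELThm re ψ

/-- Interpretation of epistemic formulas in a frame: `interpFmE F g φ = φ*`. -/
def interpFmE {W : Type*} (F : Frame W) (g : Nat → Set W) : FmE → Set W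
  | .var n => g n
  | .bot => ∅
  | .and φ ψ => interpFmE F g φ ∩ interpFmE F g ψ
  | .or φ ψ => interpFmE F g φ ∪ interpFmE F g ψ
  | .imp φ ψ => F.himp (interpFmE F g φ) (interpFmE F g ψ)
  | .k φ => {w | interpFmE F g φ ∈ F.E w}

/-! ### Syntactic development -/

inductive Deriv (re : Prop) (Γ : Set FmE) : FmE → Prop
  | ax {φ} : φ ∈ Γ → Deriv re Γ φ
  | thm {φ} : IELThm re φ → Deriv re Γ φ
  | mp {φ ψ} : Deriv re Γ (φ.imp ψ) → Deriv re Γ φ → Deriv re Γ ψ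

namespace IELTools

variable {re : Prop}

theorem thm_id (φ : FmE) : IELThm re (φ.imp φ) :=
  .mp (.mp (.ipc (.k2 φ (φ.imp φ) φ)) (.ipc (.k1 _ _))) (.ipc (.k1 _ _))

theorem derivMono {Γ Γ' : Set FmE} {φ : FmE} (h : Deriv re Γ φ) (hs : Γ ⊆ Γ') :
    Deriv re Γ' φ := by
  induction h with
  | ax h => exact .ax (hs h)
  | thm h => exact .thm h
  | mp _ _ ih1 ih2 => exact .mp ih1 ih2

theorem deduction {Γ : Set FmE} {φ ψ : FmE} (h : Deriv re (insert φ Γ) ψ) :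
    Deriv re Γ (φ.imp ψ) := by
  induction h with
  | @ax χ h =>
    rcases h with h | h
    · subst h; exact .thm (thm_id _)
    · exact .mp (.thm (.ipc (.k1 χ φ))) (.ax h)
  | @thm χ h => exact .mp (.thm (.ipc (.k1 χ φ))) (.thm h)
  | @mp α β _ _ ih1 ih2 =>
    exact .mp (.mp (.thm (.ipc (.k2 φ α β))) ih1) ih2

theorem cut {Γ : Set FmE} {φ ψ : FmE} (h1 : Deriv re Γ φ)
    (h2 : Deriv re (insert φ Γ) ψ) : Deriv re Γ ψ :=
  .mp (deduction h2) h1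

theorem deriv_sUnion {C : Set (Set FmE)} (hC : IsChain (· ⊆ ·) C) (hne : C.Nonempty)
    {φ : FmE} (h : Deriv re (⋃₀ C) φ) : ∃ Δ ∈ C, Deriv re Δ φ := by
  induction h with
  | ax h => obtain ⟨Δ, hΔ, hφ⟩ := h; exact ⟨Δ, hΔ, .ax hφ⟩
  | thm h => exact ⟨hne.choose, hne.choose_spec, .thm h⟩
  | mp _ _ ih1 ih2 =>
    obtain ⟨Δ1, h1, d1⟩ := ih1
    obtain ⟨Δ2, h2, d2⟩ := ih2
    rcases eq_or_ne Δ1 Δ2 with rfl | hne'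
    · exact ⟨Δ1, h1, .mp d1 d2⟩
    · rcases hC h1 h2 hne' with h | h
      · exact ⟨Δ2, h2, .mp (derivMono d1 h) d2⟩
      · exact ⟨Δ1, h1, .mp d1 (derivMono d2 h)⟩

/-- A prime theory: deductively closed, consistent, with the disjunction property. -/
def IsPrime (re : Prop) (Δ : Set FmE) : Prop :=
  (∀ φ, Deriv re Δ φ → φ ∈ Δ) ∧ FmE.bot ∉ Δ ∧
    (∀ φ ψ, φ.or ψ ∈ Δ → φ ∈ Δ ∨ ψ ∈ Δ)

theorem lindenbaum {Γ : Set FmE} {θ : FmE} (h : ¬ Deriv re Γ θ) :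
    ∃ Δ, Γ ⊆ Δ ∧ IsPrime re Δ ∧ θ ∉ Δ := by
  set S : Set (Set FmE) := {Δ | Γ ⊆ Δ ∧ ¬ Deriv re Δ θ} with hS
  obtain ⟨Δ, hΓΔ, hΔS, hmax⟩ : ∃ Δ, Γ ⊆ Δ ∧ Δ ∈ S ∧ ∀ Δ' ∈ S, Δ ⊆ Δ' → Δ' = Δ := by
    obtain ⟨Δ, h1, h2⟩ := zorn_subset_nonempty S (fun c hcS hc hne => by
      refine ⟨⋃₀ c, ⟨?_, fun hd => ?_⟩, fun s hs => Set.subset_sUnion_of_mem hs⟩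
      · exact (hcS hne.choose_spec).1.trans (Set.subset_sUnion_of_mem hne.choose_spec)
      · obtain ⟨Δ, hΔ, d⟩ := deriv_sUnion hc hne hd
        exact (hcS hΔ).2 d) Γ ⟨le_refl _, h⟩
    exact ⟨Δ, h1, h2.1, fun Δ' h' hle => (h2.2 h' hle).antisymm hle⟩
  have hnd : ¬ Deriv re Δ θ := hΔS.2
  have hcl : ∀ φ, Deriv re Δ φ → φ ∈ Δ := by
    intro φ hφ
    by_contra hne
    have : insert φ Δ ∈ S → False := by
      intro hmem
      have := hmax _ hmem (Set.subset_insert _ _)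
      exact hne (this ▸ Set.mem_insert _ _)
    have hd : Deriv re (insert φ Δ) θ := by
      by_contra hd
      exact this ⟨hΓΔ.trans (Set.subset_insert _ _), hd⟩
    exact hnd (cut hφ hd)
  refine ⟨Δ, hΓΔ, ⟨hcl, fun hb => hnd (.mp (.thm (.ipc (.efq θ))) (.ax hb)), ?_⟩,
    fun hθ => hnd (.ax hθ)⟩
  intro φ ψ hor
  by_contra hne
  push_neg at hne
  have h1 : Deriv re (insert φ Δ) θ := by
    by_contra hd
    have := hmax _ ⟨hΓΔ.trans (Set.subset_insert _ _), hd⟩ (Set.subset_insert _ _)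
    exact hne.1 (this ▸ Set.mem_insert _ _)
  have h2 : Deriv re (insert ψ Δ) θ := by
    by_contra hd
    have := hmax _ ⟨hΓΔ.trans (Set.subset_insert _ _), hd⟩ (Set.subset_insert _ _)
    exact hne.2 (this ▸ Set.mem_insert _ _)
  exact hnd (.mp (.mp (.mp (.thm (.ipc (.orE φ ψ θ))) (deduction h1)) (deduction h2))
    (.ax hor))

theorem deriv_empty_iff {φ : FmE} : Deriv re ∅ φ ↔ IELThm re φ := by
  constructor
  · intro h
    induction h with
    | ax h => exact absurd h (Set.notMem_empty _)
    | thm h => exact h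
    | mp _ _ ih1 ih2 => exact .mp ih1 ih2
  · exact .thm

end IELTools

/-! ### Canonical model -/

namespace IELTools

/-- Worlds of the canonical model over a prime base theory `Γ₀`. -/
def CW (re : Prop) (Γ₀ : Set FmE) := {Δ : Set FmE // IsPrime re Δ ∧ Γ₀ ⊆ Δ}

def fhat (re : Prop) (Γ₀ : Set FmE) (φ : FmE) : Set (CW re Γ₀) := {Δ | φ ∈ Δ.1}

def CF (re : Prop) (Γ₀ : Set FmE) (h₀ : IsPrime re Γ₀) : Frame (CW re Γ₀) where
  R a b := a.1 ⊆ b.1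
  P := {A | ∃ φ, A = fhat re Γ₀ φ}
  E Δ := {A | ∃ φ, A = fhat re Γ₀ φ ∧ FmE.k φ ∈ Δ.1}
  wbot := ⟨Γ₀, h₀, subset_refl _⟩

section Canon

variable {re : Prop} {Γ₀ : Set FmE}

theorem cw_closed (Δ : CW re Γ₀) {φ : FmE} (h : Deriv re Δ.1 φ) : φ ∈ Δ.1 :=
  Δ.2.1.1 _ h

theorem subset_imp (h₀ : IsPrime re Γ₀) {φ ψ : FmE} (h : fhat re Γ₀ φ ⊆ fhat re Γ₀ ψ) :
    φ.imp ψ ∈ Γ₀ := by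
  have hd : Deriv re (insert φ Γ₀) ψ := by
    by_contra hd
    obtain ⟨Δ, hsub, hpr, hψ⟩ := lindenbaum hd
    have hΔ : (⟨Δ, hpr, (Set.subset_insert _ _).trans hsub⟩ : CW re Γ₀) ∈ fhat re Γ₀ φ :=
      hsub (Set.mem_insert _ _)
    exact hψ (h hΔ)
  exact h₀.1 _ (deduction hd)

theorem kmono (h₀ : IsPrime re Γ₀) {φ ψ : FmE} (Δ : CW re Γ₀) (hK : FmE.k φ ∈ Δ.1)
    (h : fhat re Γ₀ φ ⊆ fhat re Γ₀ ψ) : FmE.k ψ ∈ Δ.1 := by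
  have himp : φ.imp ψ ∈ Δ.1 := Δ.2.2 (subset_imp h₀ h)
  exact cw_closed Δ (.mp (.mp (.thm (.kbel φ ψ)) (.mp (.thm (.core _)) (.ax himp)))
    (.ax hK))

theorem fhat_bot : fhat re Γ₀ FmE.bot = ∅ := by
  ext Δ; exact iff_of_false Δ.2.1.2.1 (Set.notMem_empty _)

theorem fhat_top : fhat re Γ₀ (FmE.bot.imp FmE.bot) = Set.univ := by
  ext Δ; simp only [Set.mem_univ, iff_true]
  exact cw_closed Δ (.thm (thm_id _))

theorem fhat_and (φ ψ : FmE) :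
    fhat re Γ₀ (φ.and ψ) = fhat re Γ₀ φ ∩ fhat re Γ₀ ψ := by
  ext Δ
  constructor
  · intro h
    exact ⟨cw_closed Δ (.mp (.thm (.ipc (.andE1 φ ψ))) (.ax h)),
      cw_closed Δ (.mp (.thm (.ipc (.andE2 φ ψ))) (.ax h))⟩
  · rintro ⟨h1, h2⟩
    exact cw_closed Δ (.mp (.mp (.thm (.ipc (.andI φ ψ))) (.ax h1)) (.ax h2))

theorem fhat_or (φ ψ : FmE) :
    fhat re Γ₀ (φ.or ψ) = fhat re Γ₀ φ ∪ fhat re Γ₀ ψ := by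
  ext Δ
  constructor
  · exact fun h => Δ.2.1.2.2 φ ψ h
  · rintro (h | h)
    · exact cw_closed Δ (.mp (.thm (.ipc (.orI1 φ ψ))) (.ax h))
    · exact cw_closed Δ (.mp (.thm (.ipc (.orI2 φ ψ))) (.ax h))

theorem fhat_imp (h₀ : IsPrime re Γ₀) (φ ψ : FmE) :
    (CF re Γ₀ h₀).himp (fhat re Γ₀ φ) (fhat re Γ₀ ψ) = fhat re Γ₀ (φ.imp ψ) := by
  ext Δ
  constructor
  · intro h
    have hd : Deriv re (insert φ Δ.1) ψ := by
      by_contra hd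
      obtain ⟨Δ', hsub, hpr, hψ⟩ := lindenbaum hd
      exact hψ (h ⟨Δ', hpr, Δ.2.2.trans ((Set.subset_insert _ _).trans hsub)⟩
        ((Set.subset_insert _ _).trans hsub) (hsub (Set.mem_insert _ _)))
    exact cw_closed Δ (deduction hd)
  · intro h Δ' hR hφ
    exact cw_closed Δ' (.mp (.ax (hR h)) (.ax hφ))

theorem fhat_kset (h₀ : IsPrime re Γ₀) (φ : FmE) :
    (CF re Γ₀ h₀).kset (fhat re Γ₀ φ) = fhat re Γ₀ (FmE.k φ) := by
  ext Δ
  constructor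
  · rintro ⟨ψ, heq, hK⟩
    exact kmono h₀ Δ hK heq.ge
  · intro h
    exact ⟨φ, rfl, h⟩

theorem truth_lemma (h₀ : IsPrime re Γ₀) (φ : FmE) :
    interpFmE (CF re Γ₀ h₀) (fun n => fhat re Γ₀ (.var n)) φ = fhat re Γ₀ φ := by
  induction φ with
  | var n => rfl
  | bot => exact (fhat_bot).symm
  | and φ ψ ih1 ih2 => rw [interpFmE, ih1, ih2, fhat_and]
  | or φ ψ ih1 ih2 => rw [interpFmE, ih1, ih2, fhat_or]
  | imp φ ψ ih1 ih2 => rw [interpFmE, ih1, ih2, fhat_imp]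
  | k φ ih =>
    show (CF re Γ₀ h₀).kset (interpFmE _ _ φ) = _
    rw [ih, fhat_kset]

theorem cf_isIELmFrame (h₀ : IsPrime re Γ₀) : IsIELmFrame (CF re Γ₀ h₀) := by
  constructor
  · refine ⟨fun w => subset_refl _, fun a b c h1 h2 => h1.trans h2,
      fun a b h1 h2 => Subtype.ext (h1.antisymm h2), fun w => w.2.2, ?_, ?_,
      ?_, ?_, ?_, ?_, ?_, ?_, ?_, ?_, ?_, ?_, ?_⟩
    · -- chains
      intro C hC
      rcases C.eq_empty_or_nonempty with rfl | ⟨x, hx⟩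
      · exact ⟨(CF re Γ₀ h₀).wbot, fun w h => absurd h (Set.notMem_empty _)⟩
      · set U : Set FmE := ⋃₀ (Subtype.val '' C) with hU
        have hchain : IsChain (· ⊆ ·) (Subtype.val '' C) := by
          rintro _ ⟨a, ha, rfl⟩ _ ⟨b, hb, rfl⟩ hne
          exact hC ha hb (fun h => hne (congrArg Subtype.val h))
        have hne : (Subtype.val '' C).Nonempty := ⟨x.1, x, hx, rfl⟩
        have hclosed : ∀ φ, Deriv re U φ → φ ∈ U := by
          intro φ hd
          obtain ⟨A, hA, d⟩ := deriv_sUnion hchain hne hd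
          obtain ⟨Δ', hΔ', rfl⟩ := hA
          exact Set.subset_sUnion_of_mem (Set.mem_image_of_mem Subtype.val hΔ') (Δ'.2.1.1 _ d)
        have hUpr : IsPrime re U := by
          refine ⟨hclosed, fun hb => ?_, fun φ ψ h => ?_⟩
          · obtain ⟨_, ⟨Δ, hΔ, rfl⟩, hbΔ⟩ := hb
            exact Δ.2.1.2.1 hbΔ
          · obtain ⟨_, ⟨Δ, hΔ, rfl⟩, hΔ'⟩ := h
            rcases Δ.2.1.2.2 φ ψ hΔ' with h | h
            · exact Or.inl (Set.subset_sUnion_of_mem (Set.mem_image_of_mem Subtype.val hΔ) h)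
            · exact Or.inr (Set.subset_sUnion_of_mem (Set.mem_image_of_mem Subtype.val hΔ) h)
        have hΓU : Γ₀ ⊆ U := x.2.2.trans (Set.subset_sUnion_of_mem (Set.mem_image_of_mem Subtype.val hx))
        exact ⟨⟨U, hUpr, hΓU⟩, fun w hw =>
          Set.subset_sUnion_of_mem (Set.mem_image_of_mem Subtype.val hw)⟩
    · -- upper sets
      rintro A ⟨φ, rfl⟩ w w' hR h
      exact hR h
    · -- ∅ ∈ P
      exact ⟨FmE.bot, fhat_bot.symm⟩
    · -- univ ∈ P
      exact ⟨FmE.bot.imp FmE.bot, fhat_top.symm⟩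
    · -- ∩
      rintro A ⟨φ, rfl⟩ B ⟨ψ, rfl⟩
      exact ⟨φ.and ψ, (fhat_and φ ψ).symm⟩
    · -- ∪
      rintro A ⟨φ, rfl⟩ B ⟨ψ, rfl⟩
      exact ⟨φ.or ψ, (fhat_or φ ψ).symm⟩
    · -- himp
      rintro A ⟨φ, rfl⟩ B ⟨ψ, rfl⟩
      exact ⟨φ.imp ψ, fhat_imp h₀ φ ψ⟩
    · -- kset
      rintro A ⟨φ, rfl⟩
      exact ⟨FmE.k φ, fhat_kset h₀ φ⟩
    · -- E ⊆ P
      rintro w A ⟨φ, rfl, _⟩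
      exact ⟨φ, rfl⟩
    · -- E nonempty
      intro w
      exact ⟨fhat re Γ₀ (FmE.bot.imp FmE.bot), FmE.bot.imp FmE.bot, rfl,
        cw_closed w (.mp (.thm (.core _)) (.thm (thm_id _)))⟩
    · -- E closed under ∩
      rintro w A ⟨φ, rfl, hφ⟩ B ⟨ψ, rfl, hψ⟩
      refine ⟨φ.and ψ, (fhat_and φ ψ).symm, ?_⟩
      have d1 : Deriv re w.1 (FmE.k (ψ.imp (φ.and ψ))) :=
        .mp (.mp (.thm (.kbel φ (ψ.imp (φ.and ψ))))
          (.mp (.thm (.core _)) (.thm (.ipc (.andI φ ψ))))) (.ax hφ)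
      exact cw_closed w (.mp (.mp (.thm (.kbel ψ (φ.and ψ))) d1) (.ax hψ))
    · -- E upward closed
      rintro w A ⟨φ, rfl, hφ⟩ B ⟨ψ, rfl⟩ hAB
      exact ⟨ψ, rfl, kmono h₀ w hφ hAB⟩
    · -- E monotone
      rintro w w' hR A ⟨φ, rfl, hφ⟩
      exact ⟨φ, rfl, hR hφ⟩
  · -- IntCo
    rintro w A ⟨φ, rfl⟩ hw
    exact ⟨φ, rfl, cw_closed w (.mp (.thm (.core φ)) (.ax hw))⟩

theorem cf_knowCond (h₀ : IsPrime re Γ₀) (hre : re) : KnowCond (CF re Γ₀ h₀) := by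
  rintro w A ⟨φ, rfl, hK⟩ w' hR hmax
  -- show φ ∈ w'
  have hK' : FmE.k φ ∈ w'.1 := hR hK
  by_cases hd : Deriv re (insert φ w'.1) FmE.bot
  · -- ¬φ ∈ w', but also ¬¬φ ∈ w' from Kφ — contradiction
    exfalso
    have hnφ : φ.imp FmE.bot ∈ w'.1 := cw_closed w' (deduction hd)
    have hnnφ : (φ.imp FmE.bot).imp FmE.bot ∈ w'.1 :=
      cw_closed w' (.mp (.thm (.intre φ hre)) (.ax hK'))
    exact w'.2.1.2.1 (cw_closed w' (.mp (.ax hnnφ) (.ax hnφ)))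
  · obtain ⟨Δ, hsub, hpr, -⟩ := lindenbaum hd
    have heq := hmax ⟨Δ, hpr, w'.2.2.trans ((Set.subset_insert _ _).trans hsub)⟩
      ((Set.subset_insert _ _).trans hsub)
    have hφΔ : φ ∈ (⟨Δ, hpr, w'.2.2.trans ((Set.subset_insert _ _).trans hsub)⟩ :
        CW re Γ₀).1 := hsub (Set.mem_insert _ _)
    rw [heq] at hφΔ
    exact hφΔ

end Canon

theorem completeness {re : Prop} {φ : FmE}
    (h : ∀ (W : Type) (F : Frame W) (g : Nat → Set W),
      IsIELmFrame F → (re → KnowCond F) → (∀ n, g n ∈ F.P) → F.wbot ∈ interpFmE F g φ) :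
    IELThm re φ := by
  by_contra hφ
  have hnd : ¬ Deriv re ∅ φ := fun hd => hφ (deriv_empty_iff.1 hd)
  obtain ⟨Γ₀, -, h₀, hφΓ⟩ := lindenbaum hnd
  have := h (CW re Γ₀) (CF re Γ₀ h₀) (fun n => fhat re Γ₀ (.var n))
    (cf_isIELmFrame h₀) (fun hre => cf_knowCond h₀ hre) (fun n => ⟨.var n, rfl⟩)
  rw [truth_lemma h₀ φ] at this
  exact hφΓ this

end IELTools

/-! ### Soundness -/

namespace IELTools

section Sound

variable {W : Type*} {F : Frame W} {g : Nat → Set W}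

theorem interp_mem_P (hb : IsBaseFrame F) (hg : ∀ n, g n ∈ F.P) :
    ∀ φ, interpFmE F g φ ∈ F.P := by
  intro φ
  induction φ with
  | var n => exact hg n
  | bot => exact hb.2.2.2.2.2.2.1
  | and φ ψ ih1 ih2 => exact hb.2.2.2.2.2.2.2.2.1 _ ih1 _ ih2
  | or φ ψ ih1 ih2 => exact hb.2.2.2.2.2.2.2.2.2.1 _ ih1 _ ih2
  | imp φ ψ ih1 ih2 => exact hb.2.2.2.2.2.2.2.2.2.2.1 _ ih1 _ ih2
  | k φ ih => exact hb.2.2.2.2.2.2.2.2.2.2.2.1 _ ih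

theorem interp_upper (hb : IsBaseFrame F) (hg : ∀ n, g n ∈ F.P) (φ : FmE)
    ⦃w w' : W⦄ (hR : F.R w w') (h : w ∈ interpFmE F g φ) : w' ∈ interpFmE F g φ :=
  hb.2.2.2.2.2.1 _ (interp_mem_P hb hg φ) hR h

theorem exists_max (hb : IsBaseFrame F) (w : W) :
    ∃ m, F.R w m ∧ F.IsMaxW m := by
  obtain ⟨hrefl, htrans, hanti, -, hchain, -⟩ := hb
  letI : Preorder W := { le := F.R, le_refl := hrefl, le_trans := htrans }
  obtain ⟨m, hwm, hm⟩ := zorn_le_nonempty₀ {v | F.R w v} (fun c hcs hc y hy => by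
    obtain ⟨ub, hub⟩ := hchain c hc
    exact ⟨ub, htrans (hcs hy) (hub y hy), hub⟩) w (hrefl w)
  refine ⟨m, hm.1, fun z hz => hanti ?_ hz⟩
  exact hm.2 (htrans hm.1 hz) hz

theorem soundness {re : Prop} (hb : IsBaseFrame F) (hco : IntCoCond F)
    (hg : ∀ n, g n ∈ F.P) (hkc : re → KnowCond F) {φ : FmE} (h : IELThm re φ) :
    ∀ w, w ∈ interpFmE F g φ := by
  have hrefl := hb.1
  have htrans := hb.2.1
  have hEinter := hb.2.2.2.2.2.2.2.2.2.2.2.2.2.2.1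
  have hEup := hb.2.2.2.2.2.2.2.2.2.2.2.2.2.2.2.1
  have hEmono := hb.2.2.2.2.2.2.2.2.2.2.2.2.2.2.2.2
  induction h with
  | ipc hax =>
    cases hax with
    | k1 φ ψ =>
      intro w w1 _ h1 w2 h2 _
      exact interp_upper hb hg φ h2 h1
    | k2 φ ψ χ =>
      intro w w1 _ h1 w2 h2 h12 w3 h3 hφ
      exact h1 w3 (htrans h2 h3) hφ w3 (hrefl w3) (h12 w3 h3 hφ)
    | andI φ ψ =>
      intro w w1 _ h1 w2 h2 hψ
      exact ⟨interp_upper hb hg φ h2 h1, hψ⟩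
    | andE1 φ ψ =>
      intro w w1 _ h1
      exact h1.1
    | andE2 φ ψ =>
      intro w w1 _ h1
      exact h1.2
    | orI1 φ ψ =>
      intro w w1 _ h1
      exact Or.inl h1
    | orI2 φ ψ =>
      intro w w1 _ h1
      exact Or.inr h1
    | orE φ ψ χ =>
      intro w w1 _ h1 w2 h2 h12 w3 h3 hor
      rcases hor with h | h
      · exact h1 w3 (htrans h2 h3) h
      · exact h12 w3 h3 h
    | efq φ =>
      intro w w1 _ h1
      exact h1.elim
  | kbel φ ψ =>
    intro w w1 _ h1 w2 h2 hKφ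
    have h1' : interpFmE F g (φ.imp ψ) ∈ F.E w2 := hEmono h2 h1
    have hint : interpFmE F g (φ.imp ψ) ∩ interpFmE F g φ ∈ F.E w2 :=
      hEinter w2 _ h1' _ hKφ
    refine hEup w2 _ hint _ (interp_mem_P hb hg ψ) ?_
    rintro v ⟨hv1, hv2⟩
    exact hv1 v (hrefl v) hv2
  | core φ =>
    intro w w1 _ h1
    exact hco w1 _ (interp_mem_P hb hg φ) h1
  | intre φ hre =>
    intro w w1 _ h1 w2 h2 hn
    obtain ⟨m, hwm, hmax⟩ := exists_max hb w2
    have hφm : m ∈ interpFmE F g φ :=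
      hkc hre w2 _ (hEmono h2 h1) m hwm hmax
    exact hn m hwm hφm
  | mp h1 h2 ih1 ih2 =>
    intro w
    exact ih1 w w (hrefl w) (ih2 w)

end Sound

end IELTools

/-- Soundness and completeness of `IEL⁻` and `IEL` w.r.t.
relational semantics: a formula `φ ∈ Fm_e` is a theorem of `IEL⁻` (resp. `IEL`)
iff `φ` is true (i.e. satisfied at the bottom world `w_⊥`) in all relational
`IEL⁻`-models (resp. `IEL`-models). -/
theorem stmt18 :
    (∀ φ : FmE, IELThm False φ ↔
      ∀ (W : Type) (F : Frame W) (g : Nat → Set W),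
        IsIELmFrame F → (∀ n, g n ∈ F.P) → F.wbot ∈ interpFmE F g φ) ∧
    (∀ φ : FmE, IELThm True φ ↔
      ∀ (W : Type) (F : Frame W) (g : Nat → Set W),
        IsIELFrame F → (∀ n, g n ∈ F.P) → F.wbot ∈ interpFmE F g φ) := by
  constructor
  · intro φ
    constructor
    · intro h W F g hF hg
      exact IELTools.soundness hF.1 hF.2 hg (fun hre => hre.elim) h _
    · intro h
      exact IELTools.completeness fun W F g h1 _ hg => h W F g h1 hg
  · intro φ
    constructor
    · intro h W F g hF hg
      exact IELTools.soundness hF.1.1 hF.1.2 hg (fun _ => hF.2) h _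
    · intro h
      exact IELTools.completeness fun W F g h1 h2 hg => h W F g ⟨h1, h2 trivial⟩ hg
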